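/- Let F and G be endofunctors of a category 𝒞 and μ : F ⟶ G a natural transformation, and suppose the forgetful functor U : Alg^G ⥤ 𝒞 has a left adjoint Fr with unit η and counit ε. Fix an F-algebra (A, α) and a G-algebra (B, β), and let f̃ : Fr(F A) ⟶ Fr(A) be the adjunct of f = α_{Fr A} ∘ G(η_A) ∘ μ_A : F A ⟶ U(Fr A). Then a morphism g : A ⟶ B in 𝒞 satisfies g ∘ α = (β ∘ μ_B) ∘ F(g) (i.e. g is an F-algebra morphism (A, α) ⟶ μ^*(B, β)) if and only if its adjunct g̃ = ε_B ∘ Fr(g) : Fr(A) ⟶ B satisfies g̃ ∘ Fr(α) = g̃ ∘ f̃. -/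

import Mathlib

open CategoryTheory Limits

universe v u

namespace PaperStmt

variable {C : Type u} [Category.{v} C]

/-- Let `Fr ⊣ forget` be a free/forgetful adjunction for `G`-algebras,
`(A, α)` an `F`-algebra, `(B, β)` a `G`-algebra and
`f̃ : Fr (F A) ⟶ Fr A` the adjunct of `f = α_{Fr A} ∘ G(η_A) ∘ μ_A`.
Then `g : A ⟶ B` satisfies `g ∘ α = (β ∘ μ_B) ∘ F g` (i.e. it is an `F`-algebra morphism
`(A, α) ⟶ μ^*(B, β)`) iff its adjunct `g̃ = ε_B ∘ Fr g` coequalizes `Fr α` and `f̃`. -/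
theorem stmt1 {F G : C ⥤ C} (μ : F ⟶ G)
    (Fr : C ⥤ Endofunctor.Algebra G)
    (adj0 : Fr ⊣ Endofunctor.Algebra.forget G)
    (A : Endofunctor.Algebra F) (B : Endofunctor.Algebra G)
    (g : A.a ⟶ B.a) :
    A.str ≫ g = F.map g ≫ μ.app B.a ≫ B.str ↔
      Fr.map A.str ≫ (Fr.map g ≫ adj0.counit.app B) =
        ((adj0.homEquiv (F.obj A.a) (Fr.obj A.a)).symm
            (μ.app A.a ≫ G.map (adj0.unit.app A.a) ≫ (Fr.obj A.a).str)) ≫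
          (Fr.map g ≫ adj0.counit.app B) := by
  rw [← Equiv.apply_eq_iff_eq (adj0.homEquiv (F.obj A.a) B)]
  simp only [Adjunction.homEquiv_unit, Adjunction.homEquiv_counit]
  have nat : ∀ {X Y : C} (h : X ⟶ Y) {Z : C} (k : ((Fr ⋙ Endofunctor.Algebra.forget G).obj Y) ⟶ Z),
      adj0.unit.app X ≫ (Fr.map h).f ≫ k = h ≫ adj0.unit.app Y ≫ k := by
    intro X Y h Z k
    erw [← Category.assoc, ← Category.assoc]
    congr 1
    exact (adj0.unit.naturality h).symm
  have tri : ∀ (Y : Endofunctor.Algebra G) {Z : C} (k : Y.a ⟶ Z),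
      adj0.unit.app Y.a ≫ (adj0.counit.app Y).f ≫ k = k := by
    intro Y Z k
    erw [← Category.assoc]
    have := adj0.right_triangle_components Y
    exact this ▸ (Category.id_comp k)
  have tri' : ∀ (Y : Endofunctor.Algebra G),
      adj0.unit.app Y.a ≫ (adj0.counit.app Y).f = 𝟙 Y.a := fun Y =>
    adj0.right_triangle_components Y
  have hL : adj0.unit.app (F.obj A.a) ≫
      (Endofunctor.Algebra.forget G).map (Fr.map A.str ≫ Fr.map g ≫ adj0.counit.app B) =
      A.str ≫ g := by
    simp only [Endofunctor.Algebra.forget_map, Endofunctor.Algebra.comp_f]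
    erw [nat, nat, tri' B, Category.comp_id]
    rfl
  have hR : adj0.unit.app (F.obj A.a) ≫
      (Endofunctor.Algebra.forget G).map
        ((Fr.map (μ.app A.a ≫ G.map (adj0.unit.app A.a) ≫ (Fr.obj A.a).str) ≫
          adj0.counit.app (Fr.obj A.a)) ≫ Fr.map g ≫ adj0.counit.app B) =
      F.map g ≫ μ.app B.a ≫ B.str := by
    have h2 := (Fr.map g ≫ adj0.counit.app B).h
    erw [Endofunctor.Algebra.comp_f] at h2
    simp only [Endofunctor.Algebra.comp_f, Functor.comp_map, Endofunctor.Algebra.forget_map]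
    simp only [Functor.id_obj] at h2
    erw [Endofunctor.Algebra.comp_f, Endofunctor.Algebra.comp_f, Category.assoc]
    erw [nat, tri (Fr.obj A.a)]
    erw [Category.assoc, Category.assoc]
    erw [← h2, ← G.map_comp_assoc, nat, tri' B, Category.comp_id, μ.naturality_assoc]
    rfl
  rw [hL]
  erw [hR]
  exact Iff.rfl

end PaperStmt
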